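/- In the reduction instance S' (defined from a Subset-Sum instance (S,t) as above), if X ⊆ [n] satisfies Σ_{i∈X} aᵢ = t, then A = {sᵢ : i ∈ X} ∪ {s_{n+i} : i ∉ X} and B = {s_{n+i} : i ∈ X} ∪ {s_{2n+1}} are disjoint nonempty subsets of S' with Σ(A) = Σ(B). -/
import Mathlib


def reductionElem (n : ℕ) (a : Fin n → ℕ) (t : ℕ) :
    Fin n ⊕ Fin n ⊕ Unit → ℕ
  | Sum.inl i => a i * 10 ^ (n + 1) + 2 * 10 ^ (i.val + 1)
  | Sum.inr (Sum.inl i) => 10 ^ (i.val + 1)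
  | Sum.inr (Sum.inr _) => t * 10 ^ (n + 1) + ∑ i : Fin n, 10 ^ (i.val + 1)

theorem stmt_12 (n : ℕ) (hn : 0 < n) (a : Fin n → ℕ) (t : ℕ)
    (hpos : ∀ i, 0 < a i) (X : Finset (Fin n)) (hX : ∑ i ∈ X, a i = t) :
    let A : Finset (Fin n ⊕ Fin n ⊕ Unit) :=
      X.image Sum.inl ∪ Xᶜ.image (fun i => Sum.inr (Sum.inl i))
    let B : Finset (Fin n ⊕ Fin n ⊕ Unit) :=
      X.image (fun i => Sum.inr (Sum.inl i)) ∪ {Sum.inr (Sum.inr ())}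
    Disjoint A B ∧ A.Nonempty ∧ B.Nonempty ∧
      ∑ j ∈ A, reductionElem n a t j = ∑ j ∈ B, reductionElem n a t j := by
  intro A B
  have hinj1 : Function.Injective (Sum.inl : Fin n → Fin n ⊕ Fin n ⊕ Unit) :=
    Sum.inl_injective
  have hinj2 : Function.Injective (fun i : Fin n => (Sum.inr (Sum.inl i) : Fin n ⊕ Fin n ⊕ Unit)) :=
    fun i j h => by simpa using h
  refine ⟨?_, ?_, ?_, ?_⟩
  · rw [Finset.disjoint_left]
    rintro x hx hx'
    simp only [A, B, Finset.mem_union, Finset.mem_image, Finset.mem_singleton,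
      Finset.mem_compl] at hx hx'
    rcases hx with ⟨i, hi, rfl⟩ | ⟨i, hi, rfl⟩
    · rcases hx' with ⟨j, hj, h⟩ | h <;> simp at h
    · rcases hx' with ⟨j, hj, h⟩ | h
      · simp only [Sum.inr.injEq, Sum.inl.injEq] at h
        exact hi (h ▸ hj)
      · simp at h
  · rcases Finset.eq_empty_or_nonempty X with rfl | ⟨i, hi⟩
    · refine ⟨Sum.inr (Sum.inl ⟨0, hn⟩), ?_⟩
      simp [A]
    · exact ⟨Sum.inl i, by simp [A, hi]⟩
  · exact ⟨Sum.inr (Sum.inr ()), by simp [B]⟩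
  · have hA : ∑ j ∈ A, reductionElem n a t j =
        (∑ i ∈ X, (a i * 10 ^ (n + 1) + 2 * 10 ^ (i.val + 1)))
        + ∑ i ∈ Xᶜ, 10 ^ (i.val + 1) := by
      rw [Finset.sum_union, Finset.sum_image (fun i _ j _ h => hinj1 h),
        Finset.sum_image (fun i _ j _ h => hinj2 h)]
      · rfl
      · rw [Finset.disjoint_left]
        rintro x hx hx'
        simp only [Finset.mem_image] at hx hx'
        obtain ⟨i, _, rfl⟩ := hx
        obtain ⟨j, _, h⟩ := hx'
        simp at h
    have hB : ∑ j ∈ B, reductionElem n a t j =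
        (∑ i ∈ X, 10 ^ (i.val + 1))
        + (t * 10 ^ (n + 1) + ∑ i : Fin n, 10 ^ (i.val + 1)) := by
      rw [Finset.sum_union, Finset.sum_image (fun i _ j _ h => hinj2 h)]
      · rfl
      · rw [Finset.disjoint_left]
        rintro x hx hx'
        simp only [Finset.mem_image] at hx
        obtain ⟨i, _, rfl⟩ := hx
        simp at hx'
    rw [hA, hB, Finset.sum_add_distrib, ← Finset.mul_sum, ← Finset.sum_mul, hX]
    have huniv : ∑ i : Fin n, 10 ^ (i.val + 1) =
        ∑ i ∈ X, 10 ^ (i.val + 1) + ∑ i ∈ Xᶜ, 10 ^ (i.val + 1) := by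
      rw [← Finset.sum_union (disjoint_compl_right), Finset.union_compl]
    rw [huniv]
    ring
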